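/- Summability with Gamma-factorial decay: let n ≥ 2 be an integer, c > 0, and let μ : ℕ → ℝ satisfy μ_k ≥ c(1+k)^{1/(n-1)} for all k. Then the series Σ_{k=0}^∞ (1+k)^{(n-2)/(n-1)} · 2^{-μ_k} / Γ(μ_k + 1/2) converges, where Γ is the real Gamma function. -/

import Mathlib

open Real Filter

/-- Summability with Gamma-factorial decay: for an integer `n ≥ 2`, `c > 0` and `μ : ℕ → ℝ`
with `μ_k ≥ c(1+k)^{1/(n-1)}` for all `k`, the series
`Σ_k (1+k)^{(n-2)/(n-1)} 2^{-μ_k} / Γ(μ_k + 1/2)` converges. -/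
theorem summable_gamma_factorial_decay
    (n : ℕ) (hn : 2 ≤ n) (c : ℝ) (hc : 0 < c) (μ : ℕ → ℝ)
    (hμ : ∀ k : ℕ, c * (1 + (k : ℝ)) ^ ((1 : ℝ) / ((n : ℝ) - 1)) ≤ μ k) :
    Summable (fun k : ℕ =>
      (1 + (k : ℝ)) ^ (((n : ℝ) - 2) / ((n : ℝ) - 1)) * (2 : ℝ) ^ (-μ k) /
        Real.Gamma (μ k + 1 / 2)) := by
  set ε : ℝ := (1 : ℝ) / ((n : ℝ) - 1) with hε_def
  have hn1 : (1 : ℝ) ≤ (n : ℝ) - 1 := by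
    have : (2 : ℝ) ≤ (n : ℝ) := by exact_mod_cast hn
    linarith
  have hn1pos : (0 : ℝ) < (n : ℝ) - 1 := by linarith
  have hε : 0 < ε := by positivity
  set f : ℕ → ℝ := fun k =>
      (1 + (k : ℝ)) ^ (((n : ℝ) - 2) / ((n : ℝ) - 1)) * (2 : ℝ) ^ (-μ k) /
        Real.Gamma (μ k + 1 / 2) with hf_def
  have hbase : ∀ k : ℕ, (1 : ℝ) ≤ 1 + (k : ℝ) := fun k => le_add_of_nonneg_right (Nat.cast_nonneg k)
  have hμpos : ∀ k : ℕ, 0 < μ k := fun k =>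
    lt_of_lt_of_le (mul_pos hc (Real.rpow_pos_of_pos (by positivity) _)) (hμ k)
  have hfnonneg : ∀ k : ℕ, 0 ≤ f k := by
    intro k
    have hG : 0 < Real.Gamma (μ k + 1 / 2) :=
      Real.Gamma_pos_of_pos (by linarith [hμpos k])
    have h1 : (0:ℝ) ≤ (1 + (k : ℝ)) ^ (((n : ℝ) - 2) / ((n : ℝ) - 1)) :=
      Real.rpow_nonneg (by positivity) _
    have h2 : (0:ℝ) ≤ (2 : ℝ) ^ (-μ k) := Real.rpow_nonneg (by norm_num) _
    exact div_nonneg (mul_nonneg h1 h2) hG.le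
  -- the map k ↦ (1+k)^ε tends to infinity
  have htop : Tendsto (fun k : ℕ => (1 + (k : ℝ)) ^ ε) atTop atTop := by
    apply (tendsto_rpow_atTop hε).comp
    exact tendsto_atTop_add_const_left atTop 1 tendsto_natCast_atTop_atTop
  set b : ℝ := c * Real.log 2 with hb_def
  have hb : 0 < b := mul_pos hc (Real.log_pos (by norm_num))
  -- dominating sequence
  set g : ℕ → ℝ := fun k => (1 + (k : ℝ)) ^ (3 : ℝ) * Real.exp (-b * (1 + (k : ℝ)) ^ ε)
    with hg_def
  have hg0 : Tendsto g atTop (nhds 0) := by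
    have h0 := (tendsto_rpow_mul_exp_neg_mul_atTop_nhds_zero (3 * ((n:ℝ) - 1)) b hb).comp htop
    have : (fun x : ℝ => x ^ (3 * ((n:ℝ) - 1)) * Real.exp (-b * x)) ∘
        (fun k : ℕ => (1 + (k : ℝ)) ^ ε) = g := by
      funext k
      show ((1 + (k : ℝ)) ^ ε) ^ (3 * ((n:ℝ) - 1)) * Real.exp (-b * (1 + (k : ℝ)) ^ ε)
        = (1 + (k : ℝ)) ^ (3 : ℝ) * Real.exp (-b * (1 + (k : ℝ)) ^ ε)
      have hε3 : ε * (3 * ((n:ℝ) - 1)) = 3 := by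
        rw [hε_def]; field_simp
      rw [← Real.rpow_mul (by positivity), hε3]
    rwa [this] at h0
  -- eventually, (1+k)^2 * f k ≤ g k
  have hev : ∀ᶠ k : ℕ in atTop, (1 + (k : ℝ)) ^ (2:ℝ) * f k ≤ g k := by
    have h32 : ∀ᶠ k : ℕ in atTop, (3/2 : ℝ) ≤ c * (1 + (k : ℝ)) ^ ε := by
      have : Tendsto (fun k : ℕ => c * (1 + (k : ℝ)) ^ ε) atTop atTop :=
        htop.const_mul_atTop hc
      exact this.eventually_ge_atTop _
    filter_upwards [h32] with k hk
    have hμk : (3/2 : ℝ) ≤ μ k := le_trans hk (hμ k)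
    have hGge : (1 : ℝ) ≤ Real.Gamma (μ k + 1 / 2) := by
      have h2mem : (2 : ℝ) ∈ Set.Ici (2:ℝ) := by norm_num
      have hxmem : μ k + 1/2 ∈ Set.Ici (2:ℝ) := by
        simp only [Set.mem_Ici]; linarith
      have := Real.Gamma_strictMonoOn_Ici.monotoneOn h2mem hxmem (by linarith)
      rwa [Real.Gamma_two] at this
    have hA : (1 + (k : ℝ)) ^ (((n : ℝ) - 2) / ((n : ℝ) - 1)) ≤ (1 + (k : ℝ)) := by
      nth_rewrite 2 [← Real.rpow_one (1 + (k:ℝ))]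
      apply Real.rpow_le_rpow_of_exponent_le (hbase k)
      rw [div_le_one hn1pos]; linarith
    have hB : (2 : ℝ) ^ (-μ k) ≤ Real.exp (-b * (1 + (k : ℝ)) ^ ε) := by
      have h1 : (2 : ℝ) ^ (-μ k) ≤ (2:ℝ) ^ (-(c * (1 + (k : ℝ)) ^ ε)) :=
        Real.rpow_le_rpow_of_exponent_le (by norm_num) (by linarith [hμ k])
      have h2 : (2:ℝ) ^ (-(c * (1 + (k : ℝ)) ^ ε)) =
          Real.exp (-b * (1 + (k : ℝ)) ^ ε) := by
        rw [Real.rpow_def_of_pos (by norm_num : (0:ℝ) < 2), hb_def]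
        ring_nf
      rw [h2] at h1; exact h1
    have hG : 0 < Real.Gamma (μ k + 1 / 2) := by linarith
    have hfle : f k ≤ (1 + (k : ℝ)) * Real.exp (-b * (1 + (k : ℝ)) ^ ε) := by
      rw [hf_def]
      have hnum : (1 + (k : ℝ)) ^ (((n : ℝ) - 2) / ((n : ℝ) - 1)) * (2 : ℝ) ^ (-μ k)
          ≤ (1 + (k : ℝ)) * Real.exp (-b * (1 + (k : ℝ)) ^ ε) := by
        apply mul_le_mul hA hB (Real.rpow_nonneg (by norm_num) _) (by positivity)
      calc (1 + (k : ℝ)) ^ (((n : ℝ) - 2) / ((n : ℝ) - 1)) * (2 : ℝ) ^ (-μ k) /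
            Real.Gamma (μ k + 1 / 2)
          ≤ (1 + (k : ℝ)) ^ (((n : ℝ) - 2) / ((n : ℝ) - 1)) * (2 : ℝ) ^ (-μ k) / 1 := by
            apply div_le_div_of_nonneg_left _ zero_lt_one hGge
            · positivity
        _ ≤ (1 + (k : ℝ)) * Real.exp (-b * (1 + (k : ℝ)) ^ ε) := by
            rw [div_one]; exact hnum
    calc (1 + (k : ℝ)) ^ (2:ℝ) * f k
        ≤ (1 + (k : ℝ)) ^ (2:ℝ) * ((1 + (k : ℝ)) * Real.exp (-b * (1 + (k : ℝ)) ^ ε)) := by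
          apply mul_le_mul_of_nonneg_left hfle (by positivity)
      _ = g k := by
          show _ = (1 + (k : ℝ)) ^ (3 : ℝ) * Real.exp (-b * (1 + (k : ℝ)) ^ ε)
          rw [show (3:ℝ) = 2 + 1 by norm_num, Real.rpow_add (by positivity),
            Real.rpow_one]
          ring
  -- hence (1+k)^2 * f k → 0
  have hto0 : Tendsto (fun k : ℕ => (1 + (k : ℝ)) ^ (2:ℝ) * f k) atTop (nhds 0) := by
    apply squeeze_zero' _ hev hg0
    filter_upwards with k
    exact mul_nonneg (by positivity) (hfnonneg k)
  -- eventual bound f k ≤ (1+k)^(-2)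
  have hev1 : ∀ᶠ k : ℕ in atTop, f k ≤ (1 + (k : ℝ)) ^ (-(2:ℝ)) := by
    filter_upwards [Filter.Tendsto.eventually_le_const (by norm_num : (0:ℝ) < 1) hto0]
      with k hk
    have hpos : (0:ℝ) < (1 + (k : ℝ)) ^ (2:ℝ) := by positivity
    rw [Real.rpow_neg (by positivity), ← one_div, le_div_iff₀ hpos]
    linarith [hk]
  -- comparison
  have hsum : Summable (fun k : ℕ => (1 + (k : ℝ)) ^ (-(2:ℝ))) := by
    have h1 : Summable (fun k : ℕ => ((k : ℝ)) ^ (-(2:ℝ))) :=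
      Real.summable_nat_rpow.2 (by norm_num)
    have h2 := (summable_nat_add_iff 1).2 h1
    refine h2.congr fun k => ?_
    push_cast
    ring_nf
  have hbigO : f =O[atTop] (fun k : ℕ => (1 + (k : ℝ)) ^ (-(2:ℝ))) := by
    rw [Asymptotics.isBigO_iff]
    refine ⟨1, ?_⟩
    filter_upwards [hev1] with k hk
    rw [Real.norm_of_nonneg (hfnonneg k),
      Real.norm_of_nonneg (Real.rpow_nonneg (by positivity) _), one_mul]
    exact hk
  exact summable_of_isBigO_nat hsum hbigO
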